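/- (Lemma 2, case 1.) Let μ > 0, ν ∈ (0,1), w_c, w_d > 0 with w_c + w_d = 1, and assume μ + ν > 1 and w_c/μ < w_d/ν. Define f(p,β) = w_c ln(pμ + (1−p)β) + w_d ln(pν + (1−p)(1−β)). Let p* = min{ w_c/(1−ν), 1 }. Then for all (p,β) ∈ [0,1]² with pμ + (1−p)β > 0 and pν + (1−p)(1−β) > 0, we have f(p,β) ≤ f(p*, 0). -/
import Mathlib
set_option maxHeartbeats 800000


theorem stmt_9 (μ ν wc wd : ℝ) (hμ : 0 < μ) (hν : ν ∈ Set.Ioo (0 : ℝ) 1)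
    (hwc : 0 < wc) (hwd : 0 < wd) (hw : wc + wd = 1)
    (hgain : 1 < μ + ν) (hratio : wc / μ < wd / ν) :
    ∀ p ∈ Set.Icc (0 : ℝ) 1, ∀ β ∈ Set.Icc (0 : ℝ) 1,
      0 < p * μ + (1 - p) * β → 0 < p * ν + (1 - p) * (1 - β) →
      wc * Real.log (p * μ + (1 - p) * β) + wd * Real.log (p * ν + (1 - p) * (1 - β))
        ≤ wc * Real.log (min (wc / (1 - ν)) 1 * μ + (1 - min (wc / (1 - ν)) 1) * 0)
          + wd * Real.log (min (wc / (1 - ν)) 1 * ν + (1 - min (wc / (1 - ν)) 1) * (1 - 0)) := by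
  obtain ⟨hν0, hν1⟩ := hν
  intro p hp β hβ hx hy
  obtain ⟨hp0, hp1⟩ := hp
  obtain ⟨hβ0, hβ1⟩ := hβ
  have h1ν : 0 < 1 - ν := by linarith
  set q : ℝ := min (wc / (1 - ν)) 1 with hqdef
  have hq0 : 0 < q := lt_min (div_pos hwc h1ν) one_pos
  have hq1 : q ≤ 1 := min_le_right _ _
  set x : ℝ := p * μ + (1 - p) * β with hxdef
  set y : ℝ := p * ν + (1 - p) * (1 - β) with hydef
  have hX : 0 < q * μ + (1 - q) * 0 := by nlinarith
  have hY : 0 < q * ν + (1 - q) * (1 - 0) := by nlinarith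
  have hcross : wc * ν < wd * μ := by
    have := (div_lt_div_iff₀ hμ hν0).mp hratio
    linarith
  -- key: wc * (x / X) + wd * (y / Y) ≤ 1
  have key : wc * (x / (q * μ + (1 - q) * 0)) + wd * (y / (q * ν + (1 - q) * (1 - 0))) ≤ 1 := by
    rcases le_or_gt (wc / (1 - ν)) 1 with h | h
    · have hq : q = wc / (1 - ν) := min_eq_left h
      have hqval : q * (1 - ν) = wc := by
        rw [hq]; field_simp
      have hYval : q * ν + (1 - q) * (1 - 0) = wd := by nlinarith
      have hXv : q * μ + (1 - q) * 0 = q * μ := by ring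
      rw [hYval, hXv]
      have hy' : wd * (y / wd) = y := by field_simp
      rw [hy']
      have hxin : (1 - ν) * x + μ * y ≤ μ := by
        rw [hxdef, hydef]
        nlinarith [mul_nonneg (mul_nonneg (by linarith : (0:ℝ) ≤ 1 - p) hβ0)
          (by linarith : (0:ℝ) ≤ μ + ν - 1)]
      have hd : wc * (x / (q * μ)) ≤ 1 - y := by
        rw [mul_div_assoc', div_le_iff₀ (mul_pos hq0 hμ), ← hqval]
        nlinarith [mul_le_mul_of_nonneg_left hxin hq0.le]
      linarith
    · have hq : q = 1 := min_eq_right h.le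
      have hwdν : wd ≤ ν := by
        have := (one_lt_div h1ν).mp h
        linarith
      rw [hq]
      have hXv : (1:ℝ) * μ + (1 - 1) * 0 = μ := by ring
      have hYv : (1:ℝ) * ν + (1 - 1) * (1 - 0) = ν := by ring
      rw [hXv, hYv]
      have hwd1 : wd = 1 - wc := by linarith
      have expand : μ * ν - (wc * ν * x + wd * μ * y)
          = (1 - p) * β * (μ * ν - wc * ν) + (1 - p) * (1 - β) * (μ * ν - wd * μ) := by
        rw [hxdef, hydef, hwd1]; ring
      have hdm : wd * μ ≤ ν * μ := mul_le_mul_of_nonneg_right hwdν hμ.le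
      have h1 : 0 ≤ (1 - p) * β * (μ * ν - wc * ν) :=
        mul_nonneg (mul_nonneg (by linarith) hβ0) (by linarith)
      have h2 : 0 ≤ (1 - p) * (1 - β) * (μ * ν - wd * μ) :=
        mul_nonneg (mul_nonneg (by linarith) (by linarith)) (by linarith)
      have hsum : wc * ν * x + wd * μ * y ≤ μ * ν := by linarith
      rw [mul_div_assoc', mul_div_assoc',
        div_add_div _ _ (ne_of_gt hμ) (ne_of_gt hν0), div_le_one (by positivity)]
      nlinarith [hsum]
  have l1 : Real.log x ≤ Real.log (q * μ + (1 - q) * 0)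
      + (x / (q * μ + (1 - q) * 0) - 1) := by
    have := Real.log_le_sub_one_of_pos (div_pos hx hX)
    rw [Real.log_div (ne_of_gt hx) (ne_of_gt hX)] at this
    linarith
  have l2 : Real.log y ≤ Real.log (q * ν + (1 - q) * (1 - 0))
      + (y / (q * ν + (1 - q) * (1 - 0)) - 1) := by
    have := Real.log_le_sub_one_of_pos (div_pos hy hY)
    rw [Real.log_div (ne_of_gt hy) (ne_of_gt hY)] at this
    linarith
  have e1 := mul_le_mul_of_nonneg_left l1 hwc.le
  have e2 := mul_le_mul_of_nonneg_left l2 hwd.le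
  rw [mul_add] at e1 e2
  have r1 : wc * (x / (q * μ + (1 - q) * 0) - 1)
      = wc * (x / (q * μ + (1 - q) * 0)) - wc := by ring
  have r2 : wd * (y / (q * ν + (1 - q) * (1 - 0)) - 1)
      = wd * (y / (q * ν + (1 - q) * (1 - 0))) - wd := by ring
  rw [r1] at e1
  rw [r2] at e2
  clear_value q x y
  ring_nf at e1 e2 key ⊢
  linarith [e1, e2, key, hw]
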